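/- arXiv:math/0309055 — 3 statements merged into one kernel-verified Lean document; each statement's English description precedes it below -/
import Mathlib

section
/- Let A be a finite set of integers and h ≥ 2. Then |hA| ≥ |A|^h / λ_{2h}(A)^{2h}, where λ_{2h}(A) is the Λ_{2h}-constant of A. -/
open Pointwise

open Complex Finset in
private lemma integral_exp_int (m : ℤ) :
    (∫ θ in (0:ℝ)..1, Complex.exp (2 * Real.pi * Complex.I * m * θ)) =
      if m = 0 then 1 else 0 := by
  rcases eq_or_ne m 0 with hm | hm
  · simp [hm]
  · have hc : (2 * (Real.pi:ℂ) * Complex.I * m) ≠ 0 := by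
      simp [Real.pi_ne_zero, Complex.I_ne_zero, hm]
    have : (∫ θ in (0:ℝ)..1, Complex.exp (2 * Real.pi * Complex.I * m * θ))
        = (Complex.exp (2 * Real.pi * Complex.I * m * 1) - Complex.exp (2 * Real.pi * Complex.I * m * 0)) / (2 * Real.pi * Complex.I * m) := by
      simpa using integral_exp_mul_complex hc (a := 0) (b := 1)
    rw [this]
    have h1 : Complex.exp (2 * Real.pi * Complex.I * m * 1) = 1 := by
      rw [mul_one]
      have := Complex.exp_int_mul_two_pi_mul_I m
      rw [← this]; ring_nf
    rw [h1]
    simp [hm]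

private lemma exp_int_theta_abs (n : ℤ) (θ : ℝ) :
    ‖Complex.exp (2 * Real.pi * Complex.I * n * θ)‖ = 1 := by
  have : (2 * (Real.pi:ℂ) * Complex.I * n * θ) = ((2 * Real.pi * n * θ : ℝ) : ℂ) * Complex.I := by
    push_cast; ring
  rw [this, Complex.norm_exp_ofReal_mul_I]

private lemma cont_exp_int (m : ℤ) :
    Continuous fun θ : ℝ => Complex.exp (2 * Real.pi * Complex.I * m * θ) := by
  fun_prop

open Complex Finset in
private lemma pow_expand (A : Finset ℤ) (h : ℕ) (θ : ℝ) :
    (∑ n ∈ A, Complex.exp (2 * Real.pi * Complex.I * n * θ)) ^ h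
      = ∑ p ∈ Fintype.piFinset (fun _ : Fin h => A),
          Complex.exp (2 * Real.pi * Complex.I * (∑ i, p i) * θ) := by
  rw [Finset.sum_pow']
  refine Finset.sum_congr rfl fun p _ => ?_
  rw [← Complex.exp_sum]
  congr 1
  push_cast
  rw [Finset.mul_sum, Finset.sum_mul]

open Complex Finset in
private lemma conj_exp_term (m : ℤ) (θ : ℝ) :
    (starRingEnd ℂ) (Complex.exp (2 * Real.pi * Complex.I * m * θ))
      = Complex.exp (2 * Real.pi * Complex.I * (-m) * θ) := by
  rw [← Complex.exp_conj]
  congr 1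
  have h1 : (2 * (Real.pi:ℂ) * Complex.I * m * θ) = ((2 * Real.pi * m * θ : ℝ):ℂ) * Complex.I := by
    push_cast; ring
  rw [h1, map_mul, Complex.conj_ofReal, Complex.conj_I]
  push_cast; ring

open Complex Finset in
private lemma conj_expand (A : Finset ℤ) (h : ℕ) (θ : ℝ) :
    (starRingEnd ℂ) ((∑ n ∈ A, Complex.exp (2 * Real.pi * Complex.I * n * θ)) ^ h)
      = ∑ p ∈ Fintype.piFinset (fun _ : Fin h => A),
          Complex.exp (2 * Real.pi * Complex.I * (-(∑ i, p i) : ℤ) * θ) := by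
  rw [pow_expand, map_sum]
  refine Finset.sum_congr rfl fun p _ => ?_
  rw [conj_exp_term]
  norm_cast

open Complex Finset in
private lemma integral_g_pow (A : Finset ℤ) (h : ℕ) :
    (∫ θ in (0:ℝ)..1,
        ((∑ n ∈ A, Complex.exp (2 * Real.pi * Complex.I * n * θ)) ^ h *
          (starRingEnd ℂ) ((∑ n ∈ A, Complex.exp (2 * Real.pi * Complex.I * n * θ)) ^ h)))
      = ∑ p ∈ Fintype.piFinset (fun _ : Fin h => A),
          ∑ q ∈ Fintype.piFinset (fun _ : Fin h => A),
            (if (∑ i, p i) = (∑ i, q i) then (1:ℂ) else 0) := by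
  have heq : ∀ θ : ℝ,
      ((∑ n ∈ A, Complex.exp (2 * Real.pi * Complex.I * n * θ)) ^ h *
        (starRingEnd ℂ) ((∑ n ∈ A, Complex.exp (2 * Real.pi * Complex.I * n * θ)) ^ h))
      = ∑ p ∈ Fintype.piFinset (fun _ : Fin h => A),
          ∑ q ∈ Fintype.piFinset (fun _ : Fin h => A),
            Complex.exp (2 * Real.pi * Complex.I * (((∑ i, p i) - (∑ i, q i) : ℤ)) * θ) := by
    intro θ
    rw [conj_expand, pow_expand, Finset.sum_mul_sum]
    refine Finset.sum_congr rfl fun p _ => Finset.sum_congr rfl fun q _ => ?_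
    rw [← Complex.exp_add]
    congr 1
    push_cast
    ring
  simp_rw [heq]
  rw [intervalIntegral.integral_finset_sum]
  · refine Finset.sum_congr rfl fun p _ => ?_
    rw [intervalIntegral.integral_finset_sum]
    · refine Finset.sum_congr rfl fun q _ => ?_
      rw [integral_exp_int]
      simp [sub_eq_zero]
    · exact fun q _ => (cont_exp_int _).intervalIntegrable 0 1
  · intro p _
    exact (continuous_finset_sum _ fun q _ => cont_exp_int _).intervalIntegrable 0 1

private lemma re_helper (z : ℂ) (h : ℕ) :
    (z ^ h * (starRingEnd ℂ) (z ^ h)).re = ‖z‖ ^ (2 * h) := by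
  rw [Complex.mul_conj, Complex.ofReal_re, Complex.normSq_eq_norm_sq, norm_pow, ← pow_mul,
    mul_comm h 2]

open Complex Finset in
private lemma integral_re_comm (A : Finset ℤ) (h : ℕ) :
    (∫ θ in (0:ℝ)..1,
        ‖∑ n ∈ A, Complex.exp (2 * Real.pi * Complex.I * n * θ)‖ ^ (2 * h))
      = (∫ θ in (0:ℝ)..1,
          ((∑ n ∈ A, Complex.exp (2 * Real.pi * Complex.I * n * θ)) ^ h *
            (starRingEnd ℂ) ((∑ n ∈ A, Complex.exp (2 * Real.pi * Complex.I * n * θ)) ^ h))).re := by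
  have hg : Continuous fun θ : ℝ => ∑ n ∈ A, Complex.exp (2 * Real.pi * Complex.I * n * θ) :=
    continuous_finset_sum _ fun n _ => cont_exp_int n
  have hc : Continuous fun θ : ℝ =>
      ((∑ n ∈ A, Complex.exp (2 * Real.pi * Complex.I * n * θ)) ^ h *
        (starRingEnd ℂ) ((∑ n ∈ A, Complex.exp (2 * Real.pi * Complex.I * n * θ)) ^ h)) :=
    (hg.pow h).mul (Complex.continuous_conj.comp (hg.pow h))
  have key := Complex.reCLM.intervalIntegral_comp_comm (μ := MeasureTheory.volume)
    (hc.intervalIntegrable 0 1)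
  simp only [Complex.reCLM_apply] at key
  rw [← key]
  refine intervalIntegral.integral_congr fun θ _ => ?_
  exact (re_helper _ h).symm

private lemma sum_mem_nsmul (A : Finset ℤ) (h : ℕ) (p : Fin h → ℤ) (hp : ∀ i, p i ∈ A) :
    (∑ i, p i) ∈ h • A := by
  rw [Finset.mem_nsmul]
  exact ⟨fun i => ⟨p i, hp i⟩, by rw [List.sum_ofFn]⟩

open Finset in
private lemma double_sum_count (A : Finset ℤ) (h : ℕ) :
    (∑ p ∈ Fintype.piFinset (fun _ : Fin h => A),
       ∑ q ∈ Fintype.piFinset (fun _ : Fin h => A),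
         (if (∑ i, p i) = (∑ i, q i) then (1:ℂ) else 0))
    = ((∑ p ∈ Fintype.piFinset (fun _ : Fin h => A),
         #((Fintype.piFinset (fun _ : Fin h => A)).filter
            (fun q => (∑ i, q i) = (∑ i, p i))) : ℕ) : ℂ) := by
  push_cast
  refine Finset.sum_congr rfl fun p _ => ?_
  rw [Finset.sum_boole]
  congr 2
  exact Finset.filter_congr fun q _ => by simp [eq_comm]

open Finset in
private lemma count_fiber (A : Finset ℤ) (h : ℕ) :
    (∑ p ∈ Fintype.piFinset (fun _ : Fin h => A),
       #((Fintype.piFinset (fun _ : Fin h => A)).filter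
          (fun q => (∑ i, q i) = (∑ i, p i))))
    = ∑ s ∈ h • A,
        #((Fintype.piFinset (fun _ : Fin h => A)).filter (fun q => (∑ i, q i) = s)) ^ 2 := by
  classical
  have hmaps : ∀ p ∈ Fintype.piFinset (fun _ : Fin h => A), (∑ i, p i) ∈ h • A := by
    intro p hp
    exact sum_mem_nsmul A h p (fun i => Fintype.mem_piFinset.1 hp i)
  rw [← Finset.sum_fiberwise_of_maps_to hmaps]
  refine Finset.sum_congr rfl fun s _ => ?_
  rw [sq]
  have : ∀ p ∈ (Fintype.piFinset (fun _ : Fin h => A)).filter (fun p => (∑ i, p i) = s),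
      #((Fintype.piFinset (fun _ : Fin h => A)).filter (fun q => (∑ i, q i) = (∑ i, p i)))
        = #((Fintype.piFinset (fun _ : Fin h => A)).filter (fun q => (∑ i, q i) = s)) := by
    intro p hp
    rw [(Finset.mem_filter.1 hp).2]
  rw [Finset.sum_congr rfl this, Finset.sum_const, smul_eq_mul]

open Finset in
private lemma count_total (A : Finset ℤ) (h : ℕ) :
    (∑ s ∈ h • A,
        #((Fintype.piFinset (fun _ : Fin h => A)).filter (fun q => (∑ i, q i) = s)))
      = A.card ^ h := by
  classical
  have hmaps : ∀ p ∈ Fintype.piFinset (fun _ : Fin h => A), (∑ i, p i) ∈ h • A := by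
    intro p hp
    exact sum_mem_nsmul A h p (fun i => Fintype.mem_piFinset.1 hp i)
  rw [← Finset.card_eq_sum_card_fiberwise hmaps, Fintype.card_piFinset]
  simp

noncomputable def lambdaConst (q : ℝ) (A : Finset ℤ) : ℝ :=
  sSup {t : ℝ | ∃ c : ℤ → ℝ, (∑ n ∈ A, (c n) ^ 2) ≤ 1 ∧
    t = (∫ θ in (0:ℝ)..1,
          ‖∑ n ∈ A, (c n : ℂ) * Complex.exp (2 * Real.pi * Complex.I * n * θ)‖ ^ q)
        ^ (1 / q)}

theorem sumset_lower_via_lambda (A : Finset ℤ) (hA : A.Nonempty) (h : ℕ) (hh : 2 ≤ h) :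
    (A.card : ℝ) ^ h / (lambdaConst (2 * (h : ℝ)) A) ^ (2 * h) ≤ ((h • A).card : ℝ) := by
  classical
  obtain ⟨a0, ha0⟩ := hA
  have hcard : 0 < A.card := Finset.card_pos.2 ⟨a0, ha0⟩
  have hApos : (0:ℝ) < (A.card:ℝ) := by exact_mod_cast hcard
  have hKpos : (0:ℝ) < ((h • A).card : ℝ) := by
    have hm : (∑ _i : Fin h, a0) ∈ h • A := sum_mem_nsmul A h (fun _ => a0) (fun _ => ha0)
    exact_mod_cast Finset.card_pos.2 ⟨_, hm⟩
  have hh0 : 0 < h := lt_of_lt_of_le two_pos hh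
  have hhR : (0:ℝ) < (h:ℝ) := by exact_mod_cast hh0
  set q : ℝ := 2 * (h:ℝ) with hqdef
  have hq0 : (0:ℝ) < q := by rw [hqdef]; linarith
  have hqn : q = ((2*h : ℕ) : ℝ) := by rw [hqdef]; push_cast; ring
  set S : Set ℝ := {t : ℝ | ∃ c : ℤ → ℝ, (∑ n ∈ A, (c n) ^ 2) ≤ 1 ∧
    t = (∫ θ in (0:ℝ)..1,
          ‖∑ n ∈ A, (c n : ℂ) * Complex.exp (2 * Real.pi * Complex.I * n * θ)‖ ^ q)
        ^ (1 / q)} with hSdef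
  have hlam : lambdaConst (2 * (h:ℝ)) A = sSup S := rfl
  -- bounded above
  set M : ℝ := (1 + (A.card:ℝ))/2 with hMdef
  have hM0 : (0:ℝ) ≤ M := by rw [hMdef]; positivity
  have hbdd : ∀ t ∈ S, t ≤ M := by
    rintro t ⟨c, hc, rfl⟩
    have hcont : Continuous fun θ : ℝ =>
        ∑ n ∈ A, (c n : ℂ) * Complex.exp (2 * Real.pi * Complex.I * n * θ) :=
      continuous_finset_sum _ fun n _ => continuous_const.mul (cont_exp_int n)
    have habs : ∀ θ : ℝ,
        ‖∑ n ∈ A, (c n : ℂ) * Complex.exp (2 * Real.pi * Complex.I * n * θ)‖ ≤ M := by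
      intro θ
      calc ‖∑ n ∈ A, (c n : ℂ) * Complex.exp (2 * Real.pi * Complex.I * n * θ)‖
          ≤ ∑ n ∈ A, ‖(c n : ℂ) * Complex.exp (2 * Real.pi * Complex.I * n * θ)‖ :=
            norm_sum_le _ _
        _ = ∑ n ∈ A, |c n| := by
            refine Finset.sum_congr rfl fun n _ => ?_
            rw [norm_mul, exp_int_theta_abs, mul_one, Complex.norm_real, Real.norm_eq_abs]
        _ ≤ ∑ n ∈ A, ((c n)^2 + 1)/2 := by
            refine Finset.sum_le_sum fun n _ => ?_
            nlinarith [sq_nonneg (|c n| - 1), sq_abs (c n), abs_nonneg (c n)]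
        _ = ((∑ n ∈ A, (c n)^2) + (A.card:ℝ))/2 := by
            rw [← Finset.sum_div, Finset.sum_add_distrib, Finset.sum_const, nsmul_eq_mul, mul_one]
        _ ≤ M := by rw [hMdef]; linarith
    have hrw : (∫ θ in (0:ℝ)..1,
          ‖∑ n ∈ A, (c n : ℂ) * Complex.exp (2 * Real.pi * Complex.I * n * θ)‖ ^ q)
        = ∫ θ in (0:ℝ)..1,
          ‖∑ n ∈ A, (c n : ℂ) * Complex.exp (2 * Real.pi * Complex.I * n * θ)‖ ^ (2*h : ℕ) := by
      refine intervalIntegral.integral_congr fun θ _ => ?_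
      rw [hqn, Real.rpow_natCast]
    rw [hrw]
    have hIle : (∫ θ in (0:ℝ)..1,
          ‖∑ n ∈ A, (c n : ℂ) * Complex.exp (2 * Real.pi * Complex.I * n * θ)‖ ^ (2*h : ℕ))
        ≤ M ^ (2*h : ℕ) := by
      have hconst : (∫ _θ in (0:ℝ)..1, M ^ (2*h : ℕ)) = M ^ (2*h : ℕ) := by simp
      rw [← hconst]
      refine intervalIntegral.integral_mono_on (by norm_num)
        (((continuous_norm.comp hcont).pow _).intervalIntegrable 0 1)
        (intervalIntegrable_const) fun θ _ => ?_
      exact pow_le_pow_left₀ (norm_nonneg _) (habs θ) _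
    have hInn : (0:ℝ) ≤ ∫ θ in (0:ℝ)..1,
          ‖∑ n ∈ A, (c n : ℂ) * Complex.exp (2 * Real.pi * Complex.I * n * θ)‖ ^ (2*h : ℕ) := by
      refine intervalIntegral.integral_nonneg (by norm_num) fun θ _ => ?_
      positivity
    calc (∫ θ in (0:ℝ)..1,
          ‖∑ n ∈ A, (c n : ℂ) * Complex.exp (2 * Real.pi * Complex.I * n * θ)‖ ^ (2*h : ℕ)) ^ (1/q)
        ≤ (M ^ (2*h : ℕ)) ^ (1/q) := Real.rpow_le_rpow hInn hIle (by positivity)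
      _ = M := by
          rw [← Real.rpow_natCast M (2*h), ← hqn, ← Real.rpow_mul hM0, mul_one_div,
            div_self hq0.ne', Real.rpow_one]
  have hBdd : BddAbove S := ⟨M, fun t ht => hbdd t ht⟩
  -- the witness
  set c₀ : ℤ → ℝ := fun _ => (Real.sqrt (A.card:ℝ))⁻¹ with hc₀def
  have hsqrt_pos : 0 < Real.sqrt (A.card:ℝ) := Real.sqrt_pos.2 hApos
  have hc₀sum : (∑ n ∈ A, (c₀ n) ^ 2) ≤ 1 := by
    rw [hc₀def]
    simp only [Finset.sum_const, nsmul_eq_mul]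
    rw [inv_pow, Real.sq_sqrt hApos.le]
    rw [mul_inv_cancel₀ hApos.ne']
  set T : ℕ := ∑ s ∈ h • A,
      Finset.card ((Fintype.piFinset (fun _ : Fin h => A)).filter (fun p => (∑ i, p i) = s)) ^ 2 with hTdef
  -- value of the integral for the witness
  have hIval : (∫ θ in (0:ℝ)..1,
        ‖∑ n ∈ A, (c₀ n : ℂ) * Complex.exp (2 * Real.pi * Complex.I * n * θ)‖ ^ q)
      = ((A.card:ℝ)^h)⁻¹ * (T:ℝ) := by
    have hpt : ∀ θ : ℝ,
        ‖∑ n ∈ A, (c₀ n : ℂ) * Complex.exp (2 * Real.pi * Complex.I * n * θ)‖ ^ q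
          = ((Real.sqrt (A.card:ℝ))⁻¹)^(2*h : ℕ) *
            ‖∑ n ∈ A, Complex.exp (2 * Real.pi * Complex.I * n * θ)‖ ^ (2*h : ℕ) := by
      intro θ
      have h1 : (∑ n ∈ A, (c₀ n : ℂ) * Complex.exp (2 * Real.pi * Complex.I * n * θ))
          = (((Real.sqrt (A.card:ℝ))⁻¹ : ℝ) : ℂ) *
            ∑ n ∈ A, Complex.exp (2 * Real.pi * Complex.I * n * θ) := by
        rw [Finset.mul_sum]
      rw [h1, norm_mul, Complex.norm_real, Real.norm_eq_abs, abs_of_nonneg (by positivity), hqn,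
        Real.rpow_natCast, mul_pow]
    rw [intervalIntegral.integral_congr fun θ _ => hpt θ, intervalIntegral.integral_const_mul]
    have h3 : (∫ θ in (0:ℝ)..1,
        ‖∑ n ∈ A, Complex.exp (2 * Real.pi * Complex.I * n * θ)‖ ^ (2*h : ℕ)) = (T:ℝ) := by
      rw [integral_re_comm, integral_g_pow, double_sum_count]
      rw [Complex.natCast_re]
      rw [hTdef]
      exact_mod_cast count_fiber A h
    rw [h3]
    congr 1
    rw [inv_pow, pow_mul, Real.sq_sqrt hApos.le]
  set t₀ : ℝ := (((A.card:ℝ)^h)⁻¹ * (T:ℝ)) ^ (1/q) with ht₀def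
  have ht₀mem : t₀ ∈ S := ⟨c₀, hc₀sum, by rw [hIval]⟩
  -- lower bound on T via Cauchy-Schwarz
  have hcs : ((A.card:ℝ)^h)^2 ≤ ((h • A).card : ℝ) * (T:ℝ) := by
    have := sq_sum_le_card_mul_sum_sq (s := h • A)
      (f := fun s => (Finset.card ((Fintype.piFinset (fun _ : Fin h => A)).filter
        (fun p => (∑ i, p i) = s)) : ℝ))
    have hsum : (∑ s ∈ h • A,
        (Finset.card ((Fintype.piFinset (fun _ : Fin h => A)).filter (fun p => (∑ i, p i) = s)) : ℝ))
          = (A.card:ℝ)^h := by exact_mod_cast congrArg (Nat.cast (R := ℝ)) (count_total A h)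
    rw [hsum] at this
    refine this.trans (le_of_eq ?_)
    congr 1
    rw [hTdef]
    push_cast
    rfl
  have hT_lb : (A.card:ℝ)^h / ((h • A).card : ℝ) ≤ ((A.card:ℝ)^h)⁻¹ * (T:ℝ) := by
    have hAh : (0:ℝ) < (A.card:ℝ)^h := by positivity
    rw [div_le_iff₀ hKpos]
    calc (A.card:ℝ)^h = ((A.card:ℝ)^h)⁻¹ * ((A.card:ℝ)^h)^2 := by
          rw [sq, inv_mul_cancel_left₀ hAh.ne']
      _ ≤ ((A.card:ℝ)^h)⁻¹ * (((h • A).card : ℝ) * (T:ℝ)) := by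
          exact mul_le_mul_of_nonneg_left hcs (by positivity)
      _ = ((A.card:ℝ)^h)⁻¹ * (T:ℝ) * ((h • A).card : ℝ) := by ring
  have hI0pos : (0:ℝ) < ((A.card:ℝ)^h)⁻¹ * (T:ℝ) :=
    lt_of_lt_of_le (by positivity) hT_lb
  have ht₀pos : 0 < t₀ := Real.rpow_pos_of_pos hI0pos _
  have hlam_ge : t₀ ≤ sSup S := le_csSup hBdd ht₀mem
  have hlam_pos : 0 < sSup S := lt_of_lt_of_le ht₀pos hlam_ge
  have ht₀pow : t₀ ^ (2*h : ℕ) = ((A.card:ℝ)^h)⁻¹ * (T:ℝ) := by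
    rw [ht₀def, ← Real.rpow_natCast _ (2*h), ← Real.rpow_mul hI0pos.le, ← hqn, one_div,
      inv_mul_cancel₀ hq0.ne', Real.rpow_one]
  have hpow_ge : (A.card:ℝ)^h / ((h • A).card : ℝ) ≤ (sSup S) ^ (2*h : ℕ) := by
    calc (A.card:ℝ)^h / ((h • A).card : ℝ) ≤ t₀ ^ (2*h : ℕ) := by rw [ht₀pow]; exact hT_lb
      _ ≤ (sSup S) ^ (2*h : ℕ) := pow_le_pow_left₀ ht₀pos.le hlam_ge _
  rw [hlam]
  rw [div_le_iff₀ (by positivity)]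
  rw [div_le_iff₀ hKpos] at hpow_ge
  linarith [hpow_ge]
end

section
/- Let A₁, A₂ be finite sets and 𝒢 ⊆ A₁ × A₂ with |𝒢| > δ|A₁||A₂|, where 0 < δ ≤ 1. Then there exist subsets A₁' ⊆ A₁ and A₂' ⊆ A₂ such that: (i) for every nonempty B₁ ⊆ A₁', |𝒢 ∩ (B₁ × A₂')| > (δ/4)|B₁||A₂'|; (ii) for every nonempty B₂ ⊆ A₂', |𝒢 ∩ (A₁' × B₂)| > (δ/4)|B₂||A₁'|; and (iii) |Aᵢ'| > (3δ/4)|Aᵢ| for i = 1, 2. -/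
open Finset

private lemma split_left {α β : Type*} [DecidableEq α] [DecidableEq β]
    (𝒢 : Finset (α × β)) (A₁' B₁ : Finset α) (A₂' : Finset β) (hB : B₁ ⊆ A₁') :
    (𝒢.filter fun p => p.1 ∈ A₁' ∧ p.2 ∈ A₂').card
      = (𝒢.filter fun p => p.1 ∈ A₁' \ B₁ ∧ p.2 ∈ A₂').card
        + (𝒢.filter fun p => p.1 ∈ B₁ ∧ p.2 ∈ A₂').card := by
  have key := Finset.card_filter_add_card_filter_not
    (s := 𝒢.filter fun p => p.1 ∈ A₁' ∧ p.2 ∈ A₂') (p := fun p => p.1 ∈ B₁)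
  rw [Finset.filter_filter, Finset.filter_filter] at key
  have e1 : (𝒢.filter fun p => (p.1 ∈ A₁' ∧ p.2 ∈ A₂') ∧ p.1 ∈ B₁)
      = 𝒢.filter fun p => p.1 ∈ B₁ ∧ p.2 ∈ A₂' := by
    apply Finset.filter_congr
    intro p _
    have := @hB p.1
    tauto
  have e2 : (𝒢.filter fun p => (p.1 ∈ A₁' ∧ p.2 ∈ A₂') ∧ ¬ p.1 ∈ B₁)
      = 𝒢.filter fun p => p.1 ∈ A₁' \ B₁ ∧ p.2 ∈ A₂' := by
    apply Finset.filter_congr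
    intro p _
    simp only [Finset.mem_sdiff, eq_iff_iff]
    tauto
  rw [e1, e2] at key
  omega

private lemma split_right {α β : Type*} [DecidableEq α] [DecidableEq β]
    (𝒢 : Finset (α × β)) (A₁' : Finset α) (A₂' B₂ : Finset β) (hB : B₂ ⊆ A₂') :
    (𝒢.filter fun p => p.1 ∈ A₁' ∧ p.2 ∈ A₂').card
      = (𝒢.filter fun p => p.1 ∈ A₁' ∧ p.2 ∈ A₂' \ B₂).card
        + (𝒢.filter fun p => p.1 ∈ A₁' ∧ p.2 ∈ B₂).card := by
  have key := Finset.card_filter_add_card_filter_not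
    (s := 𝒢.filter fun p => p.1 ∈ A₁' ∧ p.2 ∈ A₂') (p := fun p => p.2 ∈ B₂)
  rw [Finset.filter_filter, Finset.filter_filter] at key
  have e1 : (𝒢.filter fun p => (p.1 ∈ A₁' ∧ p.2 ∈ A₂') ∧ p.2 ∈ B₂)
      = 𝒢.filter fun p => p.1 ∈ A₁' ∧ p.2 ∈ B₂ := by
    apply Finset.filter_congr
    intro p _
    have := @hB p.2
    tauto
  have e2 : (𝒢.filter fun p => (p.1 ∈ A₁' ∧ p.2 ∈ A₂') ∧ ¬ p.2 ∈ B₂)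
      = 𝒢.filter fun p => p.1 ∈ A₁' ∧ p.2 ∈ A₂' \ B₂ := by
    apply Finset.filter_congr
    intro p _
    simp only [Finset.mem_sdiff, eq_iff_iff]
    tauto
  rw [e1, e2] at key
  omega

private lemma filter_card_le {α β : Type*} [DecidableEq α] [DecidableEq β]
    (𝒢 : Finset (α × β)) (S : Finset α) (T : Finset β) :
    (𝒢.filter fun p => p.1 ∈ S ∧ p.2 ∈ T).card ≤ S.card * T.card := by
  calc (𝒢.filter fun p => p.1 ∈ S ∧ p.2 ∈ T).card ≤ (S ×ˢ T).card := by
        apply Finset.card_le_card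
        intro p hp
        rw [Finset.mem_filter] at hp
        rw [Finset.mem_product]
        exact hp.2
    _ = S.card * T.card := Finset.card_product S T

theorem graph_density_regularization {α β : Type*} [DecidableEq α] [DecidableEq β]
    (A₁ : Finset α) (A₂ : Finset β) (𝒢 : Finset (α × β)) (h𝒢 : 𝒢 ⊆ A₁ ×ˢ A₂)
    (δ : ℝ) (hδ0 : 0 < δ) (hδ1 : δ ≤ 1)
    (hcard : δ * A₁.card * A₂.card < 𝒢.card) :
    ∃ A₁' ⊆ A₁, ∃ A₂' ⊆ A₂,
      (∀ B₁ ⊆ A₁', B₁.Nonempty →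
        (δ / 4) * B₁.card * A₂'.card < (((𝒢.filter fun p => p.1 ∈ B₁ ∧ p.2 ∈ A₂')).card : ℝ)) ∧
      (∀ B₂ ⊆ A₂', B₂.Nonempty →
        (δ / 4) * B₂.card * A₁'.card < (((𝒢.filter fun p => p.1 ∈ A₁' ∧ p.2 ∈ B₂)).card : ℝ)) ∧
      (3 * δ / 4) * A₁.card < (A₁'.card : ℝ) ∧ (3 * δ / 4) * A₂.card < (A₂'.card : ℝ) := by
  have hG0 : (0 : ℝ) < 𝒢.card := lt_of_le_of_lt (by positivity) hcard
  have hGne : 𝒢.Nonempty := Finset.card_pos.mp (by exact_mod_cast hG0)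
  obtain ⟨p₀, hp₀⟩ := hGne
  have hp₀' := Finset.mem_product.mp (h𝒢 hp₀)
  have hA₁pos : 0 < A₁.card := Finset.card_pos.mpr ⟨p₀.1, hp₀'.1⟩
  have hA₂pos : 0 < A₂.card := Finset.card_pos.mpr ⟨p₀.2, hp₀'.2⟩
  have hA₁R : (0 : ℝ) < A₁.card := by exact_mod_cast hA₁pos
  have hA₂R : (0 : ℝ) < A₂.card := by exact_mod_cast hA₂pos
  suffices h : ∀ n (A₁' : Finset α) (A₂' : Finset β), A₁'.card * A₂'.card = n →
      A₁' ⊆ A₁ → A₂' ⊆ A₂ →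
      ((𝒢.card : ℝ) - ((𝒢.filter fun p => p.1 ∈ A₁' ∧ p.2 ∈ A₂').card : ℝ)
        ≤ δ / 4 * ((A₁.card : ℝ) * A₂.card - (A₁'.card : ℝ) * A₂'.card)) →
      ∃ A₁' ⊆ A₁, ∃ A₂' ⊆ A₂,
        (∀ B₁ ⊆ A₁', B₁.Nonempty →
          (δ / 4) * B₁.card * A₂'.card < (((𝒢.filter fun p => p.1 ∈ B₁ ∧ p.2 ∈ A₂')).card : ℝ)) ∧
        (∀ B₂ ⊆ A₂', B₂.Nonempty →
          (δ / 4) * B₂.card * A₁'.card < (((𝒢.filter fun p => p.1 ∈ A₁' ∧ p.2 ∈ B₂)).card : ℝ)) ∧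
        (3 * δ / 4) * A₁.card < (A₁'.card : ℝ) ∧ (3 * δ / 4) * A₂.card < (A₂'.card : ℝ) by
    apply h (A₁.card * A₂.card) A₁ A₂ rfl (le_refl _) (le_refl _)
    have : (𝒢.filter fun p => p.1 ∈ A₁ ∧ p.2 ∈ A₂) = 𝒢 := by
      apply Finset.filter_true_of_mem
      intro p hp
      exact Finset.mem_product.mp (h𝒢 hp)
    rw [this]
    ring_nf
    simp
  intro n
  induction n using Nat.strong_induction_on with
  | _ n ih =>
    intro A₁' A₂' hn hs1 hs2 hinv
    -- cast facts
    have hle1 : (A₁'.card : ℝ) ≤ A₁.card := by exact_mod_cast Finset.card_le_card hs1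
    have hle2 : (A₂'.card : ℝ) ≤ A₂.card := by exact_mod_cast Finset.card_le_card hs2
    by_cases hi : ∀ B₁ ⊆ A₁', B₁.Nonempty →
        (δ / 4) * B₁.card * A₂'.card < (((𝒢.filter fun p => p.1 ∈ B₁ ∧ p.2 ∈ A₂')).card : ℝ)
    · by_cases hii : ∀ B₂ ⊆ A₂', B₂.Nonempty →
          (δ / 4) * B₂.card * A₁'.card < (((𝒢.filter fun p => p.1 ∈ A₁' ∧ p.2 ∈ B₂)).card : ℝ)
      · -- both densities hold; verify (iii)
        refine ⟨A₁', hs1, A₂', hs2, hi, hii, ?_, ?_⟩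
        · have hb : ((𝒢.filter fun p => p.1 ∈ A₁' ∧ p.2 ∈ A₂').card : ℝ)
              ≤ (A₁'.card : ℝ) * A₂'.card := by
            exact_mod_cast filter_card_le 𝒢 A₁' A₂'
          have h1 : δ * A₁.card * A₂.card < δ / 4 * (A₁.card * A₂.card) + A₁'.card * A₂.card := by
            nlinarith [(by exact_mod_cast Nat.zero_le A₁'.card : (0:ℝ) ≤ A₁'.card),
              (by exact_mod_cast Nat.zero_le A₂'.card : (0:ℝ) ≤ A₂'.card)]
          have h2 : (3 * δ / 4 * A₁.card) * A₂.card < (A₁'.card : ℝ) * A₂.card := by nlinarith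
          exact (mul_lt_mul_iff_left₀ hA₂R).mp h2
        · have hb : ((𝒢.filter fun p => p.1 ∈ A₁' ∧ p.2 ∈ A₂').card : ℝ)
              ≤ (A₁'.card : ℝ) * A₂'.card := by
            exact_mod_cast filter_card_le 𝒢 A₁' A₂'
          have h1 : δ * A₁.card * A₂.card < δ / 4 * (A₁.card * A₂.card) + A₁.card * A₂'.card := by
            nlinarith [(by exact_mod_cast Nat.zero_le A₁'.card : (0:ℝ) ≤ A₁'.card),
              (by exact_mod_cast Nat.zero_le A₂'.card : (0:ℝ) ≤ A₂'.card)]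
          have h2 : (3 * δ / 4 * A₂.card) * A₁.card < (A₂'.card : ℝ) * A₁.card := by nlinarith
          exact (mul_lt_mul_iff_left₀ hA₁R).mp h2
      · -- (ii) fails: shrink A₂'
        push_neg at hii
        obtain ⟨B₂, hB₂sub, hB₂ne, hB₂bad⟩ := hii
        have hA₁'ne : A₁'.card ≠ 0 := by
          intro h0
          have hempty : A₁' = ∅ := Finset.card_eq_zero.mp h0
          have : (𝒢.filter fun p => p.1 ∈ A₁' ∧ p.2 ∈ A₂') = ∅ := by
            subst hempty; simp
          rw [this, h0] at hinv
          simp at hinv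
          nlinarith
        have hA₁'pos : (0:ℝ) < A₁'.card := by
          have := Nat.pos_of_ne_zero hA₁'ne
          exact_mod_cast this
        have hsplit := split_right 𝒢 A₁' A₂' B₂ hB₂sub
        have hcardsd : (A₂' \ B₂).card = A₂'.card - B₂.card := Finset.card_sdiff_of_subset hB₂sub
        have hBle : B₂.card ≤ A₂'.card := Finset.card_le_card hB₂sub
        have hcR : ((A₂' \ B₂).card : ℝ) = (A₂'.card : ℝ) - B₂.card := by
          rw [hcardsd, Nat.cast_sub hBle]
        have hinv' : (𝒢.card : ℝ) - ((𝒢.filter fun p => p.1 ∈ A₁' ∧ p.2 ∈ A₂' \ B₂).card : ℝ)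
            ≤ δ / 4 * ((A₁.card : ℝ) * A₂.card - (A₁'.card : ℝ) * (A₂' \ B₂).card) := by
          have hsplitR : ((𝒢.filter fun p => p.1 ∈ A₁' ∧ p.2 ∈ A₂').card : ℝ)
              = ((𝒢.filter fun p => p.1 ∈ A₁' ∧ p.2 ∈ A₂' \ B₂).card : ℝ)
                + ((𝒢.filter fun p => p.1 ∈ A₁' ∧ p.2 ∈ B₂).card : ℝ) := by
            exact_mod_cast hsplit
          rw [hcR]
          have expand : δ / 4 * ((A₁.card : ℝ) * A₂.card - (A₁'.card : ℝ) * ((A₂'.card : ℝ) - B₂.card))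
              = δ / 4 * ((A₁.card : ℝ) * A₂.card - (A₁'.card : ℝ) * A₂'.card)
                + δ / 4 * (B₂.card : ℝ) * A₁'.card := by ring
          linarith [expand, hinv, hB₂bad, hsplitR]
        have hlt : A₁'.card * (A₂' \ B₂).card < n := by
          rw [← hn]
          have hss : A₂' \ B₂ ⊂ A₂' := Finset.sdiff_ssubset hB₂sub hB₂ne
          exact mul_lt_mul_of_pos_left (Finset.card_lt_card hss) (Nat.pos_of_ne_zero hA₁'ne)
        exact ih _ hlt A₁' (A₂' \ B₂) rfl hs1 ((Finset.sdiff_subset).trans hs2) hinv'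
    · -- (i) fails: shrink A₁'
      push_neg at hi
      obtain ⟨B₁, hB₁sub, hB₁ne, hB₁bad⟩ := hi
      have hA₂'ne : A₂'.card ≠ 0 := by
        intro h0
        have hempty : A₂' = ∅ := Finset.card_eq_zero.mp h0
        have : (𝒢.filter fun p => p.1 ∈ A₁' ∧ p.2 ∈ A₂') = ∅ := by
          subst hempty; simp
        rw [this, h0] at hinv
        simp at hinv
        nlinarith
      have hA₂'pos : (0:ℝ) < A₂'.card := by
        have := Nat.pos_of_ne_zero hA₂'ne
        exact_mod_cast this
      have hsplit := split_left 𝒢 A₁' B₁ A₂' hB₁sub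
      have hcardsd : (A₁' \ B₁).card = A₁'.card - B₁.card := Finset.card_sdiff_of_subset hB₁sub
      have hBle : B₁.card ≤ A₁'.card := Finset.card_le_card hB₁sub
      have hcR : ((A₁' \ B₁).card : ℝ) = (A₁'.card : ℝ) - B₁.card := by
        rw [hcardsd, Nat.cast_sub hBle]
      have hinv' : (𝒢.card : ℝ) - ((𝒢.filter fun p => p.1 ∈ A₁' \ B₁ ∧ p.2 ∈ A₂').card : ℝ)
          ≤ δ / 4 * ((A₁.card : ℝ) * A₂.card - ((A₁' \ B₁).card : ℝ) * A₂'.card) := by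
        have hsplitR : ((𝒢.filter fun p => p.1 ∈ A₁' ∧ p.2 ∈ A₂').card : ℝ)
            = ((𝒢.filter fun p => p.1 ∈ A₁' \ B₁ ∧ p.2 ∈ A₂').card : ℝ)
              + ((𝒢.filter fun p => p.1 ∈ B₁ ∧ p.2 ∈ A₂').card : ℝ) := by
          exact_mod_cast hsplit
        rw [hcR]
        have expand : δ / 4 * ((A₁.card : ℝ) * A₂.card - ((A₁'.card : ℝ) - B₁.card) * A₂'.card)
            = δ / 4 * ((A₁.card : ℝ) * A₂.card - (A₁'.card : ℝ) * A₂'.card)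
              + δ / 4 * (B₁.card : ℝ) * A₂'.card := by ring
        linarith [expand, hinv, hB₁bad, hsplitR]
      have hlt : (A₁' \ B₁).card * A₂'.card < n := by
        rw [← hn]
        have hss : A₁' \ B₁ ⊂ A₁' := Finset.sdiff_ssubset hB₁sub hB₁ne
        exact mul_lt_mul_of_pos_right (Finset.card_lt_card hss) (Nat.pos_of_ne_zero hA₂'ne)
      exact ih _ hlt (A₁' \ B₁) A₂' rfl ((Finset.sdiff_subset).trans hs1) hs2 hinv'
end

section
/- Let A₁, A₂ be finite subsets of an abelian group, 𝒢 ⊆ A₁ × A₂. Suppose A₁, A₂ each fiber over projections π: Aᵢ → Sᵢ, and 𝒢 respects the fibration: 𝒢 = ∪_{(s₁,s₂)∈ℋ} 𝒢_{s₁,s₂} with 𝒢_{s₁,s₂} ⊆ A₁(s₁) × A₂(s₂), where ℋ ⊆ S₁ × S₂ and Aᵢ(sᵢ) = π^{-1}(sᵢ) ∩ Aᵢ. Then |A₁ +_𝒢 A₂| ≥ |{π(x₁)+π(x₂) : (x₁,x₂) ∈ 𝒢}| · min_{(s₁,s₂)∈ℋ} |A₁(s₁) +_{𝒢_{s₁,s₂}}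 A₂(s₂)|, provided the group splits as a direct sum compatible with π (i.e., π is a group homomorphism and elements are determined by (π-part, fiber-part)). -/
theorem fibered_sumset_lower_bound {G₁ G₂ : Type*} [AddCommGroup G₁] [AddCommGroup G₂]
    [DecidableEq G₁] [DecidableEq G₂]
    (A₁ A₂ : Finset (G₁ × G₂)) (ℋ : Finset (G₁ × G₁))
    (𝒢 : Finset ((G₁ × G₂) × (G₁ × G₂))) (h𝒢 : 𝒢 ⊆ A₁ ×ˢ A₂)
    (hbase : ∀ p ∈ 𝒢, (p.1.1, p.2.1) ∈ ℋ) (m : ℕ)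
    (hfib : ∀ s ∈ ℋ,
      m ≤ (((𝒢.filter fun p => p.1.1 = s.1 ∧ p.2.1 = s.2)).image fun p => p.1.2 + p.2.2).card) :
    (𝒢.image fun p => p.1.1 + p.2.1).card * m ≤ (𝒢.image fun p => p.1 + p.2).card := by
  rw [mul_comm]
  apply Finset.mul_card_image_le_card_of_maps_to
    (f := Prod.fst) (t := 𝒢.image fun p => p.1.1 + p.2.1)
  · intro a ha
    simp only [Finset.mem_image] at ha ⊢
    obtain ⟨p, hp, rfl⟩ := ha
    exact ⟨p, hp, rfl⟩
  · intro b hb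
    simp only [Finset.mem_image] at hb
    obtain ⟨p₀, hp₀, hb⟩ := hb
    have hs := hbase p₀ hp₀
    refine le_trans (hfib _ hs) ?_
    apply Finset.card_le_card_of_injOn (fun x => (b, x))
    · intro x hx
      simp only [Finset.mem_coe, Finset.mem_image, Finset.mem_filter] at hx
      obtain ⟨q, ⟨hq, h1, h2⟩, rfl⟩ := hx
      simp only [Finset.mem_coe, Finset.mem_filter, Finset.mem_image]
      constructor
      · exact ⟨q, hq, by rw [Prod.add_def]; congr 1; rw [h1, h2]; exact hb⟩
      · trivial
    · intro x _ y _ hxy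
      simpa using hxy
end
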